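/- Let q* be the unique maximizer of S_Q over F(Q). For all indices i, j, if q*_i < Q_i and q*_j > 0, then the marginal weighted utilities satisfy ψ_i/(c_i Q_i + Ψ q*_i) ≤ ψ_j/(c_j Q_j + Ψ q*_j). -/

import Mathlib

open Finset

lemma log_div_ge' {a b : ℝ} (ha : 0 < a) (hb : 0 < b) :
    (b - a) / b ≤ Real.log b - Real.log a := by
  have h := Real.log_le_sub_one_of_pos (x := a / b) (by positivity)
  rw [Real.log_div ha.ne' hb.ne'] at h
  have e : a / b - 1 = -((b - a) / b) := by field_simp; ring
  rw [e] at h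
  linarith

lemma log_div_le' {a b : ℝ} (ha : 0 < a) (hb : 0 < b) :
    Real.log b - Real.log a ≤ (b - a) / a := by
  have h := Real.log_le_sub_one_of_pos (x := b / a) (by positivity)
  rw [Real.log_div hb.ne' ha.ne'] at h
  have e : b / a - 1 = (b - a) / a := by field_simp
  rw [e] at h
  linarith

set_option maxHeartbeats 1000000 in
/-- At the maximizer q* of S_Q over F(Q), if q*_i < Q_i and q*_j > 0 then
the marginal weighted utilities satisfy ψ_i/(c_i Q_i + Ψ q*_i) ≤ ψ_j/(c_j Q_j + Ψ q*_j). -/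
theorem stmt_8 (N : ℕ) (hN : 1 ≤ N) (ψ Q c : Fin N → ℝ)
    (hψ : ∀ i, 0 < ψ i) (hQpos : ∀ i, 0 < Q i) (hc : ∀ i, 0 < c i)
    (Ψ Qtot : ℝ) (hΨ : 0 < Ψ) (hQtot : 0 < Qtot)
    (qstar : Fin N → ℝ)
    (hfeas : (∀ i, 0 ≤ qstar i ∧ qstar i ≤ Q i) ∧ ∑ i, qstar i ≤ Qtot)
    (hmax : ∀ q : Fin N → ℝ, ((∀ i, 0 ≤ q i ∧ q i ≤ Q i) ∧ ∑ i, q i ≤ Qtot) →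
      ∑ i, ψ i * Real.log (1 + Ψ * q i / (c i * Q i)) ≤
        ∑ i, ψ i * Real.log (1 + Ψ * qstar i / (c i * Q i))) :
    ∀ i j : Fin N, qstar i < Q i → 0 < qstar j →
      ψ i / (c i * Q i + Ψ * qstar i) ≤ ψ j / (c j * Q j + Ψ * qstar j) := by
  intro i j hi hj
  rcases eq_or_ne i j with rfl | hij
  · exact le_refl _
  have hDi : 0 < c i * Q i := mul_pos (hc i) (hQpos i)
  have hDj : 0 < c j * Q j := mul_pos (hc j) (hQpos j)
  have hA : 0 < c i * Q i + Ψ * qstar i := by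
    have := (hfeas.1 i).1; nlinarith
  have hB : 0 < c j * Q j + Ψ * qstar j := by
    have := (hfeas.1 j).1; nlinarith
  -- key perturbation inequality
  have key : ∀ ε : ℝ, 0 < ε → ε ≤ Q i - qstar i → ε ≤ qstar j →
      ψ i * ((c j * Q j + Ψ * qstar j) - Ψ * ε) ≤
        ψ j * ((c i * Q i + Ψ * qstar i) + Ψ * ε) := by
    intro ε hε hεi hεj
    set q : Fin N → ℝ := fun k => if k = i then qstar i + ε
      else if k = j then qstar j - ε else qstar k with hq
    have hqi : q i = qstar i + ε := by simp [hq]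
    have hqj : q j = qstar j - ε := by simp [hq, hij.symm]
    have hqk : ∀ k, k ≠ i → k ≠ j → q k = qstar k := by
      intro k h1 h2; simp [hq, h1, h2]
    have hsum : ∑ k, q k = ∑ k, qstar k := by
      have h0 : ∑ k ∈ ({i, j} : Finset (Fin N)), (q k - qstar k) = ∑ k, (q k - qstar k) := by
        apply Finset.sum_subset (Finset.subset_univ _)
        intro k _ hk
        simp only [Finset.mem_insert, Finset.mem_singleton, not_or] at hk
        rw [hqk k hk.1 hk.2]; ring
      rw [Finset.sum_pair hij, hqi, hqj] at h0
      have h1 : ∑ k, (q k - qstar k) = ∑ k, q k - ∑ k, qstar k :=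
        Finset.sum_sub_distrib _ _
      rw [h1] at h0
      linarith
    have hfq : (∀ k, 0 ≤ q k ∧ q k ≤ Q k) ∧ ∑ k, q k ≤ Qtot := by
      refine ⟨fun k => ?_, by rw [hsum]; exact hfeas.2⟩
      rcases eq_or_ne k i with rfl | h1
      · rw [hqi]; constructor
        · have := (hfeas.1 k).1; linarith
        · linarith
      rcases eq_or_ne k j with rfl | h2
      · rw [hqj]; constructor
        · linarith
        · have := (hfeas.1 k).2; linarith
      · rw [hqk k h1 h2]; exact hfeas.1 k
    have hS := hmax q hfq
    -- reduce the sum inequality to the two changed terms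
    set f : Fin N → ℝ := fun k => ψ k * Real.log (1 + Ψ * q k / (c k * Q k)) with hf
    set g : Fin N → ℝ := fun k => ψ k * Real.log (1 + Ψ * qstar k / (c k * Q k)) with hg
    have hdiff : (f i - g i) + (f j - g j) ≤ 0 := by
      have h0 : ∑ k ∈ ({i, j} : Finset (Fin N)), (f k - g k) = ∑ k, (f k - g k) := by
        apply Finset.sum_subset (Finset.subset_univ _)
        intro k _ hk
        simp only [Finset.mem_insert, Finset.mem_singleton, not_or] at hk
        simp [hf, hg, hqk k hk.1 hk.2]
      rw [Finset.sum_pair hij] at h0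
      have h1 : ∑ k, (f k - g k) = ∑ k, f k - ∑ k, g k := Finset.sum_sub_distrib _ _
      rw [h1] at h0
      rw [h0]
      linarith
    -- rewrite the four log terms
    have hAε : 0 < c i * Q i + Ψ * qstar i + Ψ * ε := by nlinarith
    have hBε : 0 < c j * Q j + Ψ * qstar j - Ψ * ε := by nlinarith
    have efi : f i = ψ i * (Real.log (c i * Q i + Ψ * qstar i + Ψ * ε) - Real.log (c i * Q i)) := by
      rw [hf]
      simp only [hqi]
      rw [show (1 + Ψ * (qstar i + ε) / (c i * Q i))
          = (c i * Q i + Ψ * qstar i + Ψ * ε) / (c i * Q i) by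
          rw [eq_div_iff hDi.ne', add_mul, one_mul, div_mul_cancel₀ _ hDi.ne']; ring]
      rw [Real.log_div hAε.ne' hDi.ne']
    have egi : g i = ψ i * (Real.log (c i * Q i + Ψ * qstar i) - Real.log (c i * Q i)) := by
      simp only [hg]
      rw [show (1 + Ψ * qstar i / (c i * Q i))
          = (c i * Q i + Ψ * qstar i) / (c i * Q i) by
          rw [eq_div_iff hDi.ne', add_mul, one_mul, div_mul_cancel₀ _ hDi.ne']]
      rw [Real.log_div hA.ne' hDi.ne']
    have efj : f j = ψ j * (Real.log (c j * Q j + Ψ * qstar j - Ψ * ε) - Real.log (c j * Q j)) := by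
      rw [hf]
      simp only [hqj]
      rw [show (1 + Ψ * (qstar j - ε) / (c j * Q j))
          = (c j * Q j + Ψ * qstar j - Ψ * ε) / (c j * Q j) by
          rw [eq_div_iff hDj.ne', add_mul, one_mul, div_mul_cancel₀ _ hDj.ne']; ring]
      rw [Real.log_div hBε.ne' hDj.ne']
    have egj : g j = ψ j * (Real.log (c j * Q j + Ψ * qstar j) - Real.log (c j * Q j)) := by
      simp only [hg]
      rw [show (1 + Ψ * qstar j / (c j * Q j))
          = (c j * Q j + Ψ * qstar j) / (c j * Q j) by
          rw [eq_div_iff hDj.ne', add_mul, one_mul, div_mul_cancel₀ _ hDj.ne']]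
      rw [Real.log_div hB.ne' hDj.ne']
    -- lower/upper bounds on log differences
    have hlogi := log_div_ge' hA hAε
    have hlogj := log_div_le' hBε hB
    have hli : Ψ * ε / (c i * Q i + Ψ * qstar i + Ψ * ε)
        ≤ Real.log (c i * Q i + Ψ * qstar i + Ψ * ε) - Real.log (c i * Q i + Ψ * qstar i) := by
      convert hlogi using 2; ring
    have hlj : Real.log (c j * Q j + Ψ * qstar j) - Real.log (c j * Q j + Ψ * qstar j - Ψ * ε)
        ≤ Ψ * ε / (c j * Q j + Ψ * qstar j - Ψ * ε) := by
      convert hlogj using 2; ring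
    have hineq : ψ i * (Ψ * ε / (c i * Q i + Ψ * qstar i + Ψ * ε))
        ≤ ψ j * (Ψ * ε / (c j * Q j + Ψ * qstar j - Ψ * ε)) := by
      rw [efi, egi, efj, egj] at hdiff
      nlinarith [hψ i, hψ j, mul_le_mul_of_nonneg_left hli (hψ i).le,
        mul_le_mul_of_nonneg_left hlj (hψ j).le]
    have hεΨ : 0 < Ψ * ε := mul_pos hΨ hε
    rw [mul_div_assoc', mul_div_assoc', div_le_div_iff₀ hAε hBε] at hineq
    have h2 : ψ i * ((c j * Q j + Ψ * qstar j) - Ψ * ε) * (Ψ * ε)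
        ≤ ψ j * ((c i * Q i + Ψ * qstar i) + Ψ * ε) * (Ψ * ε) := by
      rw [show ψ i * ((c j * Q j + Ψ * qstar j) - Ψ * ε) * (Ψ * ε)
          = ψ i * (Ψ * ε) * (c j * Q j + Ψ * qstar j - Ψ * ε) from by ring,
        show ψ j * ((c i * Q i + Ψ * qstar i) + Ψ * ε) * (Ψ * ε)
          = ψ j * (Ψ * ε) * (c i * Q i + Ψ * qstar i + Ψ * ε) from by ring]
      exact hineq
    exact le_of_mul_le_mul_right h2 hεΨ
  -- pass to the limit ε → 0 explicitly
  rw [div_le_div_iff₀ hA hB]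
  apply le_of_forall_pos_le_add
  intro δ hδ
  have hcpos : 0 < (ψ i + ψ j) * Ψ := mul_pos (add_pos (hψ i) (hψ j)) hΨ
  set ε := min (min (Q i - qstar i) (qstar j)) (δ / ((ψ i + ψ j) * Ψ)) with hεdef
  have hε : 0 < ε := by
    apply lt_min (lt_min (by linarith) hj)
    positivity
  have hkey := key ε hε ((min_le_left _ _).trans (min_le_left _ _))
    ((min_le_left _ _).trans (min_le_right _ _))
  have hεδ : ε * ((ψ i + ψ j) * Ψ) ≤ δ :=
    (le_div_iff₀ hcpos).mp (min_le_right _ _)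
  nlinarith [hkey, hεδ, mul_pos hΨ hε]
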